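/- Let L be a 3-dimensional ℤ_p-Lie lattice with dim[L,L] = 1, and let φ : M → L be a virtual endomorphism of L (M a finite-index subalgebra). If φ is not injective, then φ is not simple; i.e., there exists a non-zero ideal I of L with I ⊆ M and φ(I) ⊆ I. -/

import Mathlib

/-- Let `L` be a 3-dimensional `ℤ_p`-Lie lattice with `dim [L,L] = 1`
and `φ : M → L` a virtual endomorphism (`M` a finite-index subalgebra). If `φ` is
not injective then `φ` is not simple: some non-zero ideal `I` of `L` satisfies
`I ⊆ M` and `φ(I) ⊆ I`. -/
theorem stmt_6 (p : ℕ) [Fact p.Prime]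
    (L : Type*) [LieRing L] [LieAlgebra ℤ_[p] L]
    [Module.Free ℤ_[p] L] [Module.Finite ℤ_[p] L]
    (h3 : Module.finrank ℤ_[p] L = 3)
    (h1 : Module.finrank ℤ_[p]
      ↥(Submodule.span ℤ_[p] {z : L | ∃ x y : L, ⁅x, y⁆ = z}) = 1)
    (M : LieSubalgebra ℤ_[p] L)
    (hfin : 0 < Nat.card (L ⧸ M.toSubmodule))
    (φ : ↥M →ₗ⁅ℤ_[p]⁆ L)
    (hinj : ¬ Function.Injective φ) :
    ∃ I : LieIdeal ℤ_[p] L, I ≠ ⊥ ∧ (∀ z : L, z ∈ I → z ∈ M) ∧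
      ∀ z : ↥M, (z : L) ∈ I → φ z ∈ I := by
  classical
  set D0 : Submodule ℤ_[p] L :=
    Submodule.span ℤ_[p] {z : L | ∃ x y : L, ⁅x, y⁆ = z} with hD0def
  have hbrD0 : ∀ a b : L, ⁅a, b⁆ ∈ D0 := fun a b =>
    Submodule.subset_span ⟨a, b, rfl⟩
  -- a nonzero kernel element
  obtain ⟨a, b, hab, hne⟩ := Function.not_injective_iff.mp hinj
  have hyk : φ (a - b) = 0 := by rw [map_sub, hab, sub_self]
  have hyne : a - b ≠ 0 := sub_ne_zero.mpr hne
  -- key: from a kernel element whose span is ad-stable, produce the ideal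
  have key : ∀ x : ↥M, φ x = 0 → x ≠ 0 →
      (∀ w : L, ⁅w, (x : L)⁆ ∈ Submodule.span ℤ_[p] {(x : L)}) →
      ∃ I : LieIdeal ℤ_[p] L, I ≠ ⊥ ∧ (∀ z : L, z ∈ I → z ∈ M) ∧
        ∀ z : ↥M, (z : L) ∈ I → φ z ∈ I := by
    intro x hk hxne hbr
    refine ⟨⟨Submodule.span ℤ_[p] {(x : L)}, ?_⟩, ?_, ?_, ?_⟩
    · intro w m hm
      have hm' : m ∈ Submodule.span ℤ_[p] {(x : L)} := hm
      rw [Submodule.mem_span_singleton] at hm'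
      obtain ⟨c, rfl⟩ := hm'
      show ⁅w, c • (x : L)⁆ ∈ Submodule.span ℤ_[p] {(x : L)}
      rw [lie_smul]
      exact Submodule.smul_mem _ c (hbr w)
    · intro hbot
      have hx : (x : L) ∈ Submodule.span ℤ_[p] {(x : L)} :=
        Submodule.mem_span_singleton_self _
      have hx' : (x : L) ∈ (⊥ : LieIdeal ℤ_[p] L) := hbot ▸ hx
      rw [LieSubmodule.mem_bot] at hx'
      exact hxne (Subtype.ext hx')
    · intro z hz
      have hz' : z ∈ Submodule.span ℤ_[p] {(x : L)} := hz
      rw [Submodule.mem_span_singleton] at hz'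
      obtain ⟨c, hc⟩ := hz'
      exact hc ▸ M.toSubmodule.smul_mem c x.2
    · intro z hz
      have hz' : (z : L) ∈ Submodule.span ℤ_[p] {(x : L)} := hz
      rw [Submodule.mem_span_singleton] at hz'
      obtain ⟨c, hc⟩ := hz'
      have hzc : z = c • x := Subtype.ext hc.symm
      have hφz : φ z = 0 := by rw [hzc, map_smul, hk, smul_zero]
      show φ z ∈ Submodule.span ℤ_[p] {(x : L)}
      rw [hφz]
      exact Submodule.zero_mem _
  by_cases hcase : ∃ x : ↥M, φ x = 0 ∧ x ≠ 0 ∧ (x : L) ∈ D0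
  · -- kernel meets the derived span: use rank-1 structure of D0
    obtain ⟨x, hk, hxne, hxD⟩ := hcase
    obtain ⟨nb, B⟩ := Submodule.basisOfPid (Module.Free.chooseBasis ℤ_[p] L) D0
    have hnb : nb = 1 := by
      have hcard := Module.finrank_eq_card_basis B
      rw [h1, Fintype.card_fin] at hcard
      omega
    subst hnb
    set g : L := (B 0 : L) with hg
    have hrep : ∀ v : D0, (v : L) = B.repr v 0 • g := by
      intro v
      conv_lhs => rw [← B.sum_repr v]
      simp [Fin.sum_univ_one, g]
    obtain ⟨c, hc⟩ : ∃ c : ℤ_[p], (x : L) = c • g := ⟨_, hrep ⟨(x : L), hxD⟩⟩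
    refine key x hk hxne ?_
    intro w
    obtain ⟨l, hl⟩ : ∃ l : ℤ_[p], ⁅w, g⁆ = l • g := ⟨_, hrep ⟨⁅w, g⁆, hbrD0 w g⟩⟩
    rw [Submodule.mem_span_singleton]
    refine ⟨l, ?_⟩
    rw [hc, lie_smul, hl, smul_comm]
  · -- kernel avoids the derived span: kernel elements are central
    push_neg at hcase
    set x : ↥M := a - b with hx
    refine key x hyk hyne ?_
    have hMcomm : ∀ m : ↥M, ⁅(m : L), (x : L)⁆ = 0 := by
      intro m
      have h1' : φ ⁅m, x⁆ = 0 := by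
        rw [LieHom.map_lie, hyk, lie_zero]
      have h2' : ((⁅m, x⁆ : ↥M) : L) ∈ D0 := hbrD0 _ _
      have h3' : (⁅m, x⁆ : ↥M) = 0 := by
        by_contra h
        exact hcase _ h1' h h2'
      calc ⁅(m : L), (x : L)⁆ = ((⁅m, x⁆ : ↥M) : L) := rfl
        _ = 0 := by rw [h3']; rfl
    intro w
    set n : ℕ := Nat.card (L ⧸ M.toSubmodule) with hn
    have hmem : (n : ℤ_[p]) • w ∈ M := by
      have hfini : Finite (L ⧸ M.toSubmodule) := Nat.finite_of_card_ne_zero hfin.ne'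
      have hq : n • (Submodule.Quotient.mk w : L ⧸ M.toSubmodule) = 0 :=
        card_nsmul_eq_zero'
      rw [← Submodule.Quotient.mk_smul, Submodule.Quotient.mk_eq_zero] at hq
      rw [Nat.cast_smul_eq_nsmul]
      exact hq
    have hzero : (n : ℤ_[p]) • ⁅w, (x : L)⁆ = 0 := by
      have hc := hMcomm ⟨(n : ℤ_[p]) • w, hmem⟩
      rw [← smul_lie]
      exact hc
    have hnne : (n : ℤ_[p]) ≠ 0 := Nat.cast_ne_zero.mpr hfin.ne'
    have hfinal : ⁅w, (x : L)⁆ = 0 := by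
      rcases smul_eq_zero.mp hzero with h | h
      · exact absurd h hnne
      · exact h
    rw [hfinal]
    exact Submodule.zero_mem _
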